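/- Let K' be a finite strongly lacunary subset of the strictly positive cone P' = P∖{0} of a partially ordered discrete abelian group Γ with compact dual G. Define the Riesz product R = ∏_{γ'∈K'} (1 + (γ' + conj(γ'))/2) as a function on G. Then R ≥ 0, R̂(0) = 1, ‖R‖₁ = 1, R̂(γ') ≥ 1/2 for every γ' ∈ K', and R̂ vanishes outside P ∪ (−P). -/

import Mathlib

open MeasureTheory ComplexConjugate


section Aux

lemma Circle.coe_zpow' (z : Circle) (n : ℤ) : ((z ^ n : Circle) : ℂ) = (z : ℂ) ^ n := by
  induction n using Int.induction_on with
  | zero => simp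
  | succ n ih => rw [zpow_add_one, zpow_add_one₀ z.coe_ne_zero, Circle.coe_mul, ih]
  | pred n ih => rw [zpow_sub_one, zpow_sub_one₀ z.coe_ne_zero, Circle.coe_mul, ih, Circle.coe_inv]

variable {G : Type*} [CommGroup G] [TopologicalSpace G] [IsTopologicalGroup G]

/-- evaluation as a monoid hom -/
noncomputable def pdEval (x : G) : PontryaginDual G →* Circle where
  toFun χ := χ x
  map_one' := rfl
  map_mul' _ _ := rfl

@[simp] lemma pdEval_apply (x : G) (χ : PontryaginDual G) : pdEval x χ = χ x := rfl

end Aux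

section Orth

open scoped Classical in
lemma char_integral {G : Type*} [CommGroup G] [TopologicalSpace G]
    [IsTopologicalGroup G] [CompactSpace G] [MeasurableSpace G] [BorelSpace G]
    (μ : Measure G) [μ.IsHaarMeasure] [IsProbabilityMeasure μ] (χ : PontryaginDual G) :
    ∫ x, (χ x : ℂ) ∂μ = if χ = 1 then 1 else 0 := by
  split_ifs with h
  · subst h
    have : ∀ x : G, ((1 : PontryaginDual G) x : ℂ) = 1 := fun _ => rfl
    simp [this]
  · have hg : ∃ g : G, χ g ≠ 1 := by
      by_contra hc
      push_neg at hc
      exact h (ContinuousMonoidHom.ext hc)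
    obtain ⟨g, hg⟩ := hg
    have h1 : ∫ x, (χ (g * x) : ℂ) ∂μ = ∫ x, (χ x : ℂ) ∂μ :=
      integral_mul_left_eq_self (fun x => (χ x : ℂ)) g
    have h2 : ∫ x, (χ (g * x) : ℂ) ∂μ = (χ g : ℂ) * ∫ x, (χ x : ℂ) ∂μ := by
      simp only [map_mul, Circle.coe_mul]
      exact integral_const_mul _ _
    have h3 : ((χ g : ℂ) - 1) * ∫ x, (χ x : ℂ) ∂μ = 0 := by
      rw [sub_mul, one_mul, ← h2, h1, sub_self]
    rcases mul_eq_zero.1 h3 with h4 | h4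
    · exact absurd (by rwa [sub_eq_zero, Circle.coe_eq_one] at h4) hg
    · exact h4

end Orth


namespace RieszAux

variable {Γ : Type*} [CommGroup Γ] (P : Submonoid Γ)

def Dom (a b : Γ) : Prop := a * b⁻¹ * b⁻¹ ∈ P ∧ a * b⁻¹ * b⁻¹ ≠ 1

variable (hP : ∀ γ : Γ, γ ∈ P → γ⁻¹ ∈ P → γ = 1)
include hP

lemma ppos_mul {p q : Γ} (hp : p ∈ P ∧ p ≠ 1) (hq : q ∈ P) : p * q ∈ P ∧ p * q ≠ 1 := by
  refine ⟨mul_mem hp.1 hq, fun h => hp.2 (hP p hp.1 ?_)⟩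
  rwa [inv_eq_of_mul_eq_one_right h]

lemma dom_trans {a b c : Γ} (hc : c ∈ P) (h1 : Dom P a b) (h2 : Dom P b c) : Dom P a c := by
  have key : a * c⁻¹ * c⁻¹ = (a * b⁻¹ * b⁻¹) * ((b * c⁻¹ * c⁻¹) * ((b * c⁻¹ * c⁻¹) * (c * c))) := by
    rw [← Additive.ofMul.apply_eq_iff_eq]
    simp only [ofMul_mul, ofMul_inv]
    abel
  rw [Dom, key]
  exact ppos_mul P hP h1 (mul_mem h2.1 (mul_mem h2.1 (mul_mem hc hc)))

lemma exists_max (S : Finset Γ) (hne : S.Nonempty) (hmem : ∀ γ ∈ S, γ ∈ P)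
    (htot : ∀ a ∈ S, ∀ b ∈ S, a ≠ b → Dom P a b ∨ Dom P b a) :
    ∃ γ₀ ∈ S, ∀ γ ∈ S, γ ≠ γ₀ → Dom P γ₀ γ := by
  classical
  induction S using Finset.induction_on with
  | empty => exact absurd hne (by simp)
  | insert a T ha ih =>
    rcases T.eq_empty_or_nonempty with rfl | hT
    · exact ⟨a, Finset.mem_insert_self a _, fun γ hγ hne' => by
        rcases Finset.mem_insert.1 hγ with rfl | h
        · exact absurd rfl hne'
        · exact absurd h (Finset.notMem_empty γ)⟩
    · obtain ⟨γ₁, hγ₁T, hγ₁max⟩ := ih hT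
        (fun γ hγ => hmem γ (Finset.mem_insert_of_mem hγ))
        (fun x hx y hy => htot x (Finset.mem_insert_of_mem hx) y (Finset.mem_insert_of_mem hy))
      have hane : a ≠ γ₁ := fun h => ha (h ▸ hγ₁T)
      rcases htot a (Finset.mem_insert_self a T) γ₁ (Finset.mem_insert_of_mem hγ₁T) hane with
        hd | hd
      · refine ⟨a, Finset.mem_insert_self a T, fun γ hγ hne' => ?_⟩
        rcases Finset.mem_insert.1 hγ with rfl | hγT
        · exact absurd rfl hne'
        · rcases eq_or_ne γ γ₁ with rfl | hne2
          · exact hd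
          · exact dom_trans P hP (hmem γ (Finset.mem_insert_of_mem hγT)) hd
              (hγ₁max γ hγT hne2)
      · refine ⟨γ₁, Finset.mem_insert_of_mem hγ₁T, fun γ hγ hne' => ?_⟩
        rcases Finset.mem_insert.1 hγ with rfl | hγT
        · exact hd
        · exact hγ₁max γ hγT hne'

lemma dom_prod : ∀ S : Finset Γ, (∀ γ ∈ S, γ ∈ P ∧ γ ≠ 1) →
    (∀ a ∈ S, ∀ b ∈ S, a ≠ b → Dom P a b ∨ Dom P b a) →
    ∀ γ₀, γ₀ ∈ P → γ₀ ≠ 1 → (∀ γ ∈ S, Dom P γ₀ γ) →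
    γ₀ * (∏ γ ∈ S, γ)⁻¹ ∈ P ∧ γ₀ * (∏ γ ∈ S, γ)⁻¹ ≠ 1 := by
  classical
  intro S
  induction S using Finset.strongInductionOn with
  | _ S ih =>
    intro hS htot γ₀ hγ₀P hγ₀1 hdom
    rcases S.eq_empty_or_nonempty with rfl | hne
    · simpa using ⟨hγ₀P, hγ₀1⟩
    · obtain ⟨γ₁, hγ₁S, hγ₁max⟩ := exists_max P hP S hne (fun γ hγ => (hS γ hγ).1) htot
      set S' := S.erase γ₁ with hS'
      have hsub : S' ⊂ S := Finset.erase_ssubset hγ₁S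
      have h₁ := ih S' hsub (fun γ hγ => hS γ (Finset.mem_of_mem_erase hγ))
        (fun a ha b hb => htot a (Finset.mem_of_mem_erase ha) b (Finset.mem_of_mem_erase hb))
        γ₁ (hS γ₁ hγ₁S).1 (hS γ₁ hγ₁S).2
        (fun γ hγ => hγ₁max γ (Finset.mem_of_mem_erase hγ) (Finset.ne_of_mem_erase hγ))
      have heq : γ₀ * (∏ γ ∈ S, γ)⁻¹ =
          (γ₀ * γ₁⁻¹ * γ₁⁻¹) * (γ₁ * (∏ γ ∈ S', γ)⁻¹) := by
        rw [← Finset.mul_prod_erase S _ hγ₁S, ← hS']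
        rw [← Additive.ofMul.apply_eq_iff_eq]
        simp only [ofMul_mul, ofMul_inv]
        abel
      rw [heq]
      exact ppos_mul P hP (hdom γ₁ hγ₁S) h₁.1

open Finset in
lemma comb_pos (S : Finset Γ) (hS : ∀ γ ∈ S, γ ∈ P ∧ γ ≠ 1)
    (htot : ∀ a ∈ S, ∀ b ∈ S, a ≠ b → Dom P a b ∨ Dom P b a)
    (ε : Γ → ℤ) (hε : ∀ γ ∈ S, ε γ = 1 ∨ ε γ = 0 ∨ ε γ = -1)
    (γ₀ : Γ) (hγ₀S : γ₀ ∈ S) (hεγ₀ : ε γ₀ = 1)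
    (hmax : ∀ γ ∈ S, ε γ ≠ 0 → γ ≠ γ₀ → Dom P γ₀ γ) :
    (∏ γ ∈ S, γ ^ ε γ) ∈ P ∧ (∏ γ ∈ S, γ ^ ε γ) ≠ 1 := by
  classical
  set T₀ := S.filter (fun γ => ε γ ≠ 0) with hT₀
  have hγ₀T₀ : γ₀ ∈ T₀ := mem_filter.2 ⟨hγ₀S, by rw [hεγ₀]; exact one_ne_zero⟩
  set T' := T₀.erase γ₀ with hT'
  have hT'S : ∀ γ ∈ T', γ ∈ S := fun γ hγ => (mem_filter.1 (mem_of_mem_erase hγ)).1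
  have step1 : (∏ γ ∈ S, γ ^ ε γ) = ∏ γ ∈ T₀, γ ^ ε γ := by
    rw [hT₀, prod_filter_of_ne]
    intro γ _ hne h0
    exact hne (by rw [h0, zpow_zero])
  have step2 : (∏ γ ∈ T₀, γ ^ ε γ) = γ₀ * ∏ γ ∈ T', γ ^ ε γ := by
    rw [← mul_prod_erase T₀ _ hγ₀T₀, hεγ₀, zpow_one, hT']
  have hA : γ₀ * (∏ γ ∈ T', γ)⁻¹ ∈ P ∧ γ₀ * (∏ γ ∈ T', γ)⁻¹ ≠ 1 := by
    refine dom_prod P hP T' (fun γ hγ => hS γ (hT'S γ hγ))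
      (fun a ha b hb => htot a (hT'S a ha) b (hT'S b hb))
      γ₀ (hS γ₀ hγ₀S).1 (hS γ₀ hγ₀S).2 (fun γ hγ => ?_)
    exact hmax γ (hT'S γ hγ) (mem_filter.1 (mem_of_mem_erase hγ)).2 (ne_of_mem_erase hγ)
  have hB : (∏ γ ∈ T', γ ^ ε γ * γ) ∈ P := by
    refine Submonoid.prod_mem P (fun γ hγ => ?_)
    have hγS := hT'S γ hγ
    have hne0 : ε γ ≠ 0 := (mem_filter.1 (mem_of_mem_erase hγ)).2
    rcases hε γ hγS with h1 | h1 | h1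
    · rw [h1, zpow_one]; exact mul_mem (hS γ hγS).1 (hS γ hγS).1
    · exact absurd h1 hne0
    · rw [h1, zpow_neg, zpow_one, inv_mul_cancel]; exact one_mem P
  have heq : (∏ γ ∈ S, γ ^ ε γ) =
      (γ₀ * (∏ γ ∈ T', γ)⁻¹) * ∏ γ ∈ T', γ ^ ε γ * γ := by
    rw [step1, step2, prod_mul_distrib]
    rw [← Additive.ofMul.apply_eq_iff_eq]
    simp only [ofMul_mul, ofMul_inv]
    abel
  rw [heq]
  exact ppos_mul P hP hA hB

open Finset in
lemma comb (S : Finset Γ) (hS : ∀ γ ∈ S, γ ∈ P ∧ γ ≠ 1)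
    (htot : ∀ a ∈ S, ∀ b ∈ S, a ≠ b → Dom P a b ∨ Dom P b a)
    (ε : Γ → ℤ) (hε : ∀ γ ∈ S, ε γ = 1 ∨ ε γ = 0 ∨ ε γ = -1) :
    ((∏ γ ∈ S, γ ^ ε γ) ∈ P ∨ (∏ γ ∈ S, γ ^ ε γ)⁻¹ ∈ P) ∧
      ((∃ γ ∈ S, ε γ ≠ 0) → (∏ γ ∈ S, γ ^ ε γ) ≠ 1) := by
  classical
  by_cases hz : ∀ γ ∈ S, ε γ = 0
  · have : (∏ γ ∈ S, γ ^ ε γ) = 1 :=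
      Finset.prod_eq_one (fun γ hγ => by rw [hz γ hγ, zpow_zero])
    exact ⟨Or.inl (this ▸ one_mem P), fun ⟨γ, hγ, hne⟩ => absurd (hz γ hγ) hne⟩
  · push_neg at hz
    set T₀ := S.filter (fun γ => ε γ ≠ 0) with hT₀
    have hT₀ne : T₀.Nonempty := by
      obtain ⟨γ, hγ, h0⟩ := hz
      exact ⟨γ, mem_filter.2 ⟨hγ, h0⟩⟩
    obtain ⟨γ₀, hγ₀T₀, hγ₀max⟩ := exists_max P hP T₀ hT₀ne
      (fun γ hγ => (hS γ (mem_filter.1 hγ).1).1)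
      (fun a ha b hb => htot a (mem_filter.1 ha).1 b (mem_filter.1 hb).1)
    have hγ₀S : γ₀ ∈ S := (mem_filter.1 hγ₀T₀).1
    have hγ₀0 : ε γ₀ ≠ 0 := (mem_filter.1 hγ₀T₀).2
    have hmax : ∀ γ ∈ S, ε γ ≠ 0 → γ ≠ γ₀ → Dom P γ₀ γ :=
      fun γ hγ h0 hne => hγ₀max γ (mem_filter.2 ⟨hγ, h0⟩) hne
    rcases hε γ₀ hγ₀S with h1 | h1 | h1
    · have h := comb_pos P hP S hS htot ε hε γ₀ hγ₀S h1 hmax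
      exact ⟨Or.inl h.1, fun _ => h.2⟩
    · exact absurd h1 hγ₀0
    · have hε' : ∀ γ ∈ S, -ε γ = 1 ∨ -ε γ = 0 ∨ -ε γ = -1 := by
        intro γ hγ
        rcases hε γ hγ with h | h | h
        · right; right; rw [h]
        · right; left; rw [h]; rfl
        · left; rw [h]; rfl
      have hmax' : ∀ γ ∈ S, -ε γ ≠ 0 → γ ≠ γ₀ → Dom P γ₀ γ := by
        intro γ hγ h0 hne
        exact hmax γ hγ (fun hc => h0 (by rw [hc]; rfl)) hne
      have h := comb_pos P hP S hS htot (fun γ => -ε γ) hε' γ₀ hγ₀S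
        (by show -ε γ₀ = 1; rw [h1]; rfl) hmax'
      have hprod : (∏ γ ∈ S, γ ^ (-ε γ)) = (∏ γ ∈ S, γ ^ ε γ)⁻¹ := by
        rw [← prod_inv_distrib]
        exact Finset.prod_congr rfl (fun γ _ => zpow_neg γ (ε γ))
      rw [hprod] at h
      refine ⟨Or.inr h.1, fun _ hq => h.2 ?_⟩
      rw [hq, inv_one]

end RieszAux


/-- Properties of the finite Riesz product `R = ∏_{γ' ∈ K'} (1 + (γ' + conj γ')/2)` over a
finite strongly lacunary subset `K'` of the strictly positive cone `P \ {1}` of a partially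
ordered dual of a compact abelian group `G`: `R ≥ 0`, `R̂(1) = 1`, `‖R‖₁ = 1`,
`R̂(γ') ≥ 1/2` for `γ' ∈ K'`, and `R̂` vanishes outside `P ∪ P⁻¹`. -/
theorem riesz_product_properties {G : Type*} [CommGroup G] [TopologicalSpace G]
    [IsTopologicalGroup G] [CompactSpace G] [MeasurableSpace G] [BorelSpace G]
    (μ : Measure G) [μ.IsHaarMeasure] [IsProbabilityMeasure μ]
    (P : Submonoid (PontryaginDual G))
    (hP : ∀ γ : PontryaginDual G, γ ∈ P → γ⁻¹ ∈ P → γ = 1)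
    (K' : Finset (PontryaginDual G)) (hK'P : ∀ γ ∈ K', γ ∈ P ∧ γ ≠ 1)
    (hlac : ∀ γ ∈ K', ∀ γ' ∈ K', γ ≠ γ' →
      (γ * γ'⁻¹ * γ'⁻¹ ∈ P ∧ γ * γ'⁻¹ * γ'⁻¹ ≠ 1) ∨
      (γ' * γ⁻¹ * γ⁻¹ ∈ P ∧ γ' * γ⁻¹ * γ⁻¹ ≠ 1))
    (R : G → ℂ) (hR : ∀ x, R x = ∏ γ' ∈ K', (1 + ((γ' x : ℂ) + conj ((γ' x : ℂ))) / 2)) :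
    (∀ x, 0 ≤ (R x).re ∧ (R x).im = 0) ∧
    (∫ x, R x ∂μ) = 1 ∧
    (∫ x, ‖R x‖ ∂μ) = 1 ∧
    (∀ γ' ∈ K', (1 : ℝ) / 2 ≤ (∫ x, R x * conj ((γ' x : ℂ)) ∂μ).re ∧
      (∫ x, R x * conj ((γ' x : ℂ)) ∂μ).im = 0) ∧
    (∀ γ : PontryaginDual G, γ ∉ P → γ⁻¹ ∉ P →
      ∫ x, R x * conj ((γ x : ℂ)) ∂μ = 0) := by
  classical
  -- basic data
  set T : Finset ℤ := {-1, 0, 1} with hT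
  set c : ℤ → ℝ := fun e => if e = 0 then 1 else 1/2 with hc
  set Λ : Finset ((γ : PontryaginDual G) → γ ∈ K' → ℤ) := K'.pi (fun _ => T) with hΛ
  set C : ((γ : PontryaginDual G) → γ ∈ K' → ℤ) → ℝ :=
    fun p => ∏ γ ∈ K'.attach, c (p γ.1 γ.2) with hC
  set Q : ((γ : PontryaginDual G) → γ ∈ K' → ℤ) → PontryaginDual G :=
    fun p => ∏ γ ∈ K'.attach, γ.1 ^ (p γ.1 γ.2) with hQ
  -- the factor identity
  have hfactor : ∀ z : Circle, (1 + ((z : ℂ) + conj ((z : ℂ))) / 2)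
      = ∑ e ∈ T, (c e : ℂ) * (z : ℂ) ^ e := by
    intro z
    have hz : (z : ℂ) ≠ 0 := z.coe_ne_zero
    rw [← Circle.coe_inv_eq_conj, Circle.coe_inv]
    rw [hT, show ((-1 : ℤ) : ℤ) = -1 from rfl]
    rw [Finset.sum_insert (by decide), Finset.sum_insert (by decide), Finset.sum_singleton]
    simp only [hc]
    norm_num
    field_simp
    ring
  -- key pointwise expansion
  have hkey : ∀ x : G, (∏ γ' ∈ K', (1 + ((γ' x : ℂ) + conj ((γ' x : ℂ))) / 2))
      = ∑ p ∈ Λ, (C p : ℂ) * ((Q p) x : ℂ) := by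
    intro x
    have h1 : (∏ γ' ∈ K', (1 + ((γ' x : ℂ) + conj ((γ' x : ℂ))) / 2))
        = ∏ γ' ∈ K', ∑ e ∈ T, (c e : ℂ) * (γ' x : ℂ) ^ e :=
      Finset.prod_congr rfl (fun γ' _ => hfactor (γ' x))
    rw [h1, Finset.prod_sum]
    refine Finset.sum_congr rfl (fun p hp => ?_)
    rw [Finset.prod_mul_distrib]
    congr 1
    · rw [hC]; push_cast; rfl
    · rw [hQ]
      have : ((∏ γ ∈ K'.attach, γ.1 ^ (p γ.1 γ.2) : PontryaginDual G) x : ℂ)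
          = ∏ γ ∈ K'.attach, ((γ.1 ^ (p γ.1 γ.2) : PontryaginDual G) x : ℂ) := by
        rw [show ((∏ γ ∈ K'.attach, γ.1 ^ (p γ.1 γ.2) : PontryaginDual G) x)
            = pdEval x (∏ γ ∈ K'.attach, γ.1 ^ (p γ.1 γ.2)) from rfl, map_prod]
        exact map_prod Circle.coeHom _ _
      rw [this]
      refine Finset.prod_congr rfl (fun γ _ => ?_)
      rw [show ((γ.1 ^ (p γ.1 γ.2) : PontryaginDual G) x) = pdEval x (γ.1 ^ (p γ.1 γ.2)) from rfl,
        map_zpow, pdEval_apply, Circle.coe_zpow']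
  -- epsilon values and combinatorial facts
  have hεmem : ∀ p ∈ Λ, ∀ (γ) (h : γ ∈ K'), p γ h = 1 ∨ p γ h = 0 ∨ p γ h = -1 := by
    intro p hp γ h
    have hm := Finset.mem_pi.1 hp γ h
    rw [hT] at hm
    simp only [Finset.mem_insert, Finset.mem_singleton] at hm
    tauto
  have hcomb : ∀ p ∈ Λ, (Q p ∈ P ∨ (Q p)⁻¹ ∈ P) ∧
      ((∃ γ, ∃ h : γ ∈ K', p γ h ≠ 0) → Q p ≠ 1) := by
    intro p hp
    set ε : PontryaginDual G → ℤ := fun γ => if h : γ ∈ K' then p γ h else 0 with hε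
    have hQp : Q p = ∏ γ ∈ K', γ ^ ε γ := by
      calc Q p = ∏ γ ∈ K'.attach, γ.1 ^ ε γ.1 := by
            simp only [hQ]
            exact Finset.prod_congr rfl (fun γ _ => by simp only [hε, dif_pos γ.2])
        _ = ∏ γ ∈ K', γ ^ ε γ := Finset.prod_attach K' (fun γ => γ ^ ε γ)
    have h := RieszAux.comb P hP K' hK'P (fun a ha b hb hne => hlac a ha b hb hne) ε
      (fun γ hγ => by simp only [hε, dif_pos hγ]; exact hεmem p hp γ hγ)
    rw [hQp]
    refine ⟨h.1, fun ⟨γ, hγ, h0⟩ => h.2 ⟨γ, hγ, ?_⟩⟩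
    simpa only [hε, dif_pos hγ] using h0
  -- the master Fourier coefficient formula
  have master : ∀ χ : PontryaginDual G,
      ∫ x, (∏ γ' ∈ K', (1 + ((γ' x : ℂ) + conj ((γ' x : ℂ))) / 2)) * conj ((χ x : ℂ)) ∂μ
        = ((∑ p ∈ Λ, C p * (if Q p = χ then 1 else 0) : ℝ) : ℂ) := by
    intro χ
    have hpt : ∀ x : G,
        (∏ γ' ∈ K', (1 + ((γ' x : ℂ) + conj ((γ' x : ℂ))) / 2)) * conj ((χ x : ℂ))
        = ∑ p ∈ Λ, (C p : ℂ) * (((Q p * χ⁻¹ : PontryaginDual G)) x : ℂ) := by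
      intro x
      rw [hkey x, Finset.sum_mul]
      refine Finset.sum_congr rfl (fun p _ => ?_)
      have h2 : (((Q p * χ⁻¹ : PontryaginDual G)) x : ℂ) = ((Q p) x : ℂ) * conj ((χ x : ℂ)) := by
        rw [show ((Q p * χ⁻¹ : PontryaginDual G)) x = (Q p) x * (χ x)⁻¹ from rfl,
          Circle.coe_mul, Circle.coe_inv_eq_conj]
      rw [h2, mul_assoc]
    have hint : ∀ p ∈ Λ, Integrable (fun x => (C p : ℂ) *
        (((Q p * χ⁻¹ : PontryaginDual G)) x : ℂ)) μ := by
      intro p _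
      refine Continuous.integrable_of_hasCompactSupport ?_ ((isClosed_tsupport _).isCompact)
      exact continuous_const.mul (continuous_subtype_val.comp (map_continuous _))
    calc ∫ x, (∏ γ' ∈ K', (1 + ((γ' x : ℂ) + conj ((γ' x : ℂ))) / 2)) * conj ((χ x : ℂ)) ∂μ
        = ∫ x, ∑ p ∈ Λ, (C p : ℂ) * (((Q p * χ⁻¹ : PontryaginDual G)) x : ℂ) ∂μ := by
          simp only [hpt]
      _ = ∑ p ∈ Λ, ∫ x, (C p : ℂ) * (((Q p * χ⁻¹ : PontryaginDual G)) x : ℂ) ∂μ :=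
          integral_finset_sum Λ hint
      _ = ∑ p ∈ Λ, ((C p * (if Q p = χ then 1 else 0) : ℝ) : ℂ) := by
          refine Finset.sum_congr rfl (fun p _ => ?_)
          rw [integral_const_mul, char_integral μ (Q p * χ⁻¹)]
          rw [show (Q p * χ⁻¹ = 1) = (Q p = χ) from propext mul_inv_eq_one]
          split_ifs <;> push_cast <;> ring
      _ = ((∑ p ∈ Λ, C p * (if Q p = χ then 1 else 0) : ℝ) : ℂ) := by
          rw [Complex.ofReal_sum]
  -- real form of R
  set r : G → ℝ := fun x => ∏ γ' ∈ K', (1 + ((γ' x : ℂ)).re) with hr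
  have hRr : ∀ x : G, (∏ γ' ∈ K', (1 + ((γ' x : ℂ) + conj ((γ' x : ℂ))) / 2)) = ((r x : ℝ) : ℂ) := by
    intro x
    simp only [hr]
    rw [Complex.ofReal_prod]
    refine Finset.prod_congr rfl (fun γ' _ => ?_)
    rw [Complex.add_conj]
    push_cast
    ring
  have hr0 : ∀ x, 0 ≤ r x := by
    intro x
    refine Finset.prod_nonneg (fun γ' _ => ?_)
    have h1 : |((γ' x : ℂ)).re| ≤ 1 := by
      have h2 := Complex.abs_re_le_norm ((γ' x : ℂ))
      rwa [Circle.norm_coe] at h2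
    linarith [(abs_le.1 h1).1]
  -- conclusion 2
  have hone : (∫ x, R x ∂μ) = 1 := by
    have h1 : ∀ x : G, R x = (∏ γ' ∈ K', (1 + ((γ' x : ℂ) + conj ((γ' x : ℂ))) / 2))
        * conj (((1 : PontryaginDual G) x : ℂ)) := by
      intro x
      rw [show ((1 : PontryaginDual G) x : ℂ) = 1 from rfl, map_one, mul_one]
      exact hR x
    rw [show (fun x => R x) = fun x =>
      (∏ γ' ∈ K', (1 + ((γ' x : ℂ) + conj ((γ' x : ℂ))) / 2))
        * conj (((1 : PontryaginDual G) x : ℂ)) from funext h1]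
    rw [master 1]
    set p₀ : (γ : PontryaginDual G) → γ ∈ K' → ℤ := fun _ _ => 0 with hp₀
    have hp₀Λ : p₀ ∈ Λ := by
      rw [hΛ]
      refine Finset.mem_pi.2 (fun γ h => ?_)
      simp [hp₀, hT]
    have hsum : (∑ p ∈ Λ, C p * (if Q p = 1 then 1 else 0)) = 1 := by
      rw [Finset.sum_eq_single p₀]
      · have hQ0 : Q p₀ = 1 := by
          simp only [hQ, hp₀]
          exact Finset.prod_eq_one (fun γ _ => zpow_zero _)
        have hC0 : C p₀ = 1 := by
          simp only [hC, hp₀]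
          exact Finset.prod_eq_one (fun γ _ => by simp [hc])
        rw [hQ0, hC0, if_pos rfl, one_mul]
      · intro b hb hbne
        have hex : ∃ γ, ∃ h : γ ∈ K', b γ h ≠ 0 := by
          by_contra hcon
          push_neg at hcon
          exact hbne (funext fun γ => funext fun h => hcon γ h)
        rw [if_neg ((hcomb b hb).2 hex), mul_zero]
      · intro hcon
        exact absurd hp₀Λ hcon
    rw [hsum, Complex.ofReal_one]
  -- conclusion 3
  have hrint : (∫ x, r x ∂μ) = 1 := by
    have h1 : (∫ x, R x ∂μ) = ((∫ x, r x ∂μ : ℝ) : ℂ) := by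
      rw [show (fun x => R x) = fun x => ((r x : ℝ) : ℂ) from
        funext (fun x => (hR x).trans (hRr x))]
      exact integral_ofReal
    rw [h1] at hone
    exact_mod_cast hone
  have habs : (∫ x, ‖R x‖ ∂μ) = 1 := by
    rw [show (fun x => ‖R x‖) = fun x => r x from funext (fun x => by
      rw [hR x, hRr x, Complex.norm_real, Real.norm_eq_abs, abs_of_nonneg (hr0 x)])]
    exact hrint
  -- nonnegativity of coefficients
  have hC0 : ∀ p, 0 ≤ C p := by
    intro p
    simp only [hC]
    refine Finset.prod_nonneg (fun γ _ => ?_)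
    simp only [hc]
    split_ifs <;> norm_num
  refine ⟨?_, hone, habs, ?_, ?_⟩
  · intro x
    rw [hR x, hRr x]
    exact ⟨by rw [Complex.ofReal_re]; exact hr0 x, Complex.ofReal_im _⟩
  · -- conclusion 4
    intro γ' hγ'
    have hmas : (∫ x, R x * conj ((γ' x : ℂ)) ∂μ)
        = ((∑ p ∈ Λ, C p * (if Q p = γ' then 1 else 0) : ℝ) : ℂ) := by
      rw [show (fun x => R x * conj ((γ' x : ℂ))) = fun x =>
        (∏ γ'' ∈ K', (1 + ((γ'' x : ℂ) + conj ((γ'' x : ℂ))) / 2)) * conj ((γ' x : ℂ)) from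
        funext (fun x => by rw [hR x])]
      exact master γ'
    rw [hmas]
    refine ⟨?_, Complex.ofReal_im _⟩
    rw [Complex.ofReal_re]
    set p₁ : (γ : PontryaginDual G) → γ ∈ K' → ℤ := fun γ _ => if γ = γ' then 1 else 0 with hp₁
    have hp₁Λ : p₁ ∈ Λ := by
      rw [hΛ]
      refine Finset.mem_pi.2 (fun γ h => ?_)
      by_cases hγγ' : γ = γ' <;> simp [hp₁, hγγ', hT]
    have hQP₁ : Q p₁ = γ' := by
      have h1 : Q p₁ = ∏ γ ∈ K', γ ^ (if γ = γ' then (1 : ℤ) else 0) := by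
        simp only [hQ, hp₁]
        exact Finset.prod_attach K' (fun γ => γ ^ (if γ = γ' then (1 : ℤ) else 0))
      rw [h1, Finset.prod_eq_single γ']
      · rw [if_pos rfl, zpow_one]
      · intro b _ hbne
        rw [if_neg hbne, zpow_zero]
      · intro hcon
        exact absurd hγ' hcon
    have hCP₁ : C p₁ = 1/2 := by
      have h1 : C p₁ = ∏ γ ∈ K', c (if γ = γ' then (1 : ℤ) else 0) := by
        simp only [hC, hp₁]
        exact Finset.prod_attach K' (fun γ => c (if γ = γ' then (1 : ℤ) else 0))
      rw [h1, Finset.prod_eq_single γ']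
      · rw [if_pos rfl]; simp [hc]
      · intro b _ hbne
        rw [if_neg hbne]; simp [hc]
      · intro hcon
        exact absurd hγ' hcon
    have hterm : C p₁ * (if Q p₁ = γ' then 1 else 0) = 1/2 := by
      rw [hQP₁, if_pos rfl, hCP₁, mul_one]
    calc (1 : ℝ)/2 = C p₁ * (if Q p₁ = γ' then 1 else 0) := hterm.symm
      _ ≤ ∑ p ∈ Λ, C p * (if Q p = γ' then 1 else 0) := by
          refine Finset.single_le_sum (f := fun p => C p * (if Q p = γ' then (1:ℝ) else 0)) (fun p _ => ?_) hp₁Λ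
          have := hC0 p
          split_ifs <;> nlinarith
  · -- conclusion 5
    intro γ hγP hγiP
    have hmas : (∫ x, R x * conj ((γ x : ℂ)) ∂μ)
        = ((∑ p ∈ Λ, C p * (if Q p = γ then 1 else 0) : ℝ) : ℂ) := by
      rw [show (fun x => R x * conj ((γ x : ℂ))) = fun x =>
        (∏ γ'' ∈ K', (1 + ((γ'' x : ℂ) + conj ((γ'' x : ℂ))) / 2)) * conj ((γ x : ℂ)) from
        funext (fun x => by rw [hR x])]
      exact master γ
    rw [hmas, Complex.ofReal_eq_zero]
    refine Finset.sum_eq_zero (fun p hp => ?_)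
    have h1 := (hcomb p hp).1
    have hQne : Q p ≠ γ := by
      intro hcon
      rcases h1 with h | h
      · exact hγP (hcon ▸ h)
      · exact hγiP (hcon ▸ h)
    rw [if_neg hQne, mul_zero]
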